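/- Let G = (V, E) be a finite directed graph with stubborn node set V_0 and non-stubborn set V_1 = V \ V_0, posting rates λ_k > 0, and let the matrix G (indexed by V_1) have entries G_ii = −Σ_{k friend of i} λ_k and G_ij = λ_j for j ≠ i with (j,i) ∈ E and j ∈ V_1. If from every non-stubborn node there is a path in the reversed follow graph to some stubborn node (every non-stubborn user is reachable by a stubborn user), then G is invertible, and hence the equilibrium condition Gθ = FΨ has a unique solution θ for any stubborn opinion vector Ψ. -/
import Mathlib

/-- Key step: if `x` is in the kernel of `G`, `M` bounds `|x|`, `M > 0`, and `x v = M`,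
then every friend `b` of `v` is non-stubborn and also has `x = M`. -/
theorem equilibrium_crux {V : Type*} [Fintype V] [DecidableEq V]
    (E : V → V → Prop) [DecidableRel E]
    (V0 : Set V) [DecidablePred (· ∈ V0)]
    (lam : V → ℝ) (hlam : ∀ k, 0 < lam k)
    (G : Matrix {v : V // v ∉ V0} {v : V // v ∉ V0} ℝ)
    (hG : ∀ i j : {v : V // v ∉ V0},
      G i j = if i = j then -∑ k ∈ Finset.univ.filter (fun k => E k i.1), lam k
              else if E j.1 i.1 then lam j.1 else 0)
    (x : {v : V // v ∉ V0} → ℝ) (hx : G.mulVec x = 0)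
    (M : ℝ) (hM : ∀ j, |x j| ≤ M) (hMpos : 0 < M)
    (v : {v : V // v ∉ V0}) (hv : x v = M) :
    ∀ b, E b v.1 → ∃ h : b ∉ V0, x ⟨b, h⟩ = M := by
  classical
  set T : Finset V := Finset.univ.filter (fun k => E k v.1) with hT
  set S : ℝ := ∑ k ∈ T, lam k with hS
  -- auxiliary vector on V
  set w : V → ℝ := fun k => if h : k ∉ V0 then (if k = v.1 then 0 else x ⟨k, h⟩) else 0 with hw
  have hwle : ∀ k, w k ≤ M := by
    intro k
    simp only [hw]
    split
    · split
      · exact le_of_lt hMpos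
      · exact (abs_le.mp (hM _)).2
    · exact le_of_lt hMpos
  -- the row equation at v
  have hrow : (G.mulVec x) v = 0 := by rw [hx]; rfl
  have hrow' : (-S) * x v + ∑ j ∈ Finset.univ.erase v,
      (if E j.1 v.1 then lam j.1 else 0) * x j = 0 := by
    have h0 : ∑ j, G v j * x j = 0 := by
      simpa [Matrix.mulVec, dotProduct] using hrow
    calc (-S) * x v + ∑ j ∈ Finset.univ.erase v, (if E j.1 v.1 then lam j.1 else 0) * x j
        = ∑ j, G v j * x j := by
          rw [← Finset.add_sum_erase _ (fun j => G v j * x j) (Finset.mem_univ v)]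
          congr 1
          · rw [hG v v, if_pos rfl]
          · apply Finset.sum_congr rfl
            intro j hj
            have hne : ¬ v = j := fun h => (Finset.mem_erase.mp hj).1 h.symm
            rw [hG v j, if_neg hne]
      _ = 0 := h0
  -- rewrite the off-diagonal sum as a sum over T
  have hconv : ∑ j ∈ Finset.univ.erase v, (if E j.1 v.1 then lam j.1 else 0) * x j
      = ∑ k ∈ T, lam k * w k := by
    have h1 : ∑ j ∈ Finset.univ.erase v, (if E j.1 v.1 then lam j.1 else 0) * x j
        = ∑ j : {v : V // v ∉ V0}, (if E j.1 v.1 then lam j.1 else 0) * w j.1 := by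
      rw [← Finset.add_sum_erase _ (fun j : {v : V // v ∉ V0} =>
        (if E j.1 v.1 then lam j.1 else 0) * w j.1) (Finset.mem_univ v)]
      have : w v.1 = 0 := by simp [hw, v.2]
      rw [this, mul_zero, zero_add]
      apply Finset.sum_congr rfl
      intro j hj
      have hne : j.1 ≠ v.1 := fun h => (Finset.mem_erase.mp hj).1 (Subtype.ext h)
      have : w j.1 = x j := by simp [hw, j.2, hne]
      rw [this]
    have h2 : ∑ j : {v : V // v ∉ V0}, (if E j.1 v.1 then lam j.1 else 0) * w j.1
        = ∑ k ∈ Finset.univ.filter (fun k : V => k ∉ V0),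
            (if E k v.1 then lam k else 0) * w k := by
      rw [Finset.sum_subtype (p := fun k : V => k ∉ V0)
        (Finset.univ.filter (fun k : V => k ∉ V0))
        (by intro k; simp) (fun k => (if E k v.1 then lam k else 0) * w k)]
    have h3 : ∑ k ∈ Finset.univ.filter (fun k : V => k ∉ V0),
        (if E k v.1 then lam k else 0) * w k
        = ∑ k : V, (if E k v.1 then lam k else 0) * w k := by
      rw [Finset.sum_filter_of_ne]
      intro k _ hk
      by_contra hk0
      have hwk : w k = 0 := by simp only [hw]; rw [dif_neg (not_not_intro hk0)]
      rw [hwk, mul_zero] at hk; exact hk rfl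
    have h4 : ∑ k : V, (if E k v.1 then lam k else 0) * w k = ∑ k ∈ T, lam k * w k := by
      rw [hT, Finset.sum_filter]
      apply Finset.sum_congr rfl
      intro k _
      split <;> simp
    rw [h1, h2, h3, h4]
  -- the balance equation
  have hbal : ∑ k ∈ T, lam k * w k = ∑ k ∈ T, lam k * M := by
    have : S * M = ∑ k ∈ T, lam k * w k := by
      rw [← hconv]
      have := hrow'
      rw [hv] at this
      linarith
    rw [← this, hS, Finset.sum_mul]
  -- termwise equality
  have hterm : ∀ k ∈ T, lam k * w k = lam k * M := by
    have hle : ∀ k ∈ T, lam k * w k ≤ lam k * M := fun k _ =>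
      mul_le_mul_of_nonneg_left (hwle k) (le_of_lt (hlam k))
    exact (Finset.sum_eq_sum_iff_of_le hle).mp hbal
  intro b hb
  have hbT : b ∈ T := by simp [hT, hb]
  have hwb : w b = M := mul_left_cancel₀ (hlam b).ne' (hterm b hbT)
  simp only [hw] at hwb
  by_cases hb0 : b ∉ V0
  · rw [dif_pos hb0] at hwb
    by_cases hbv : b = v.1
    · rw [if_pos hbv] at hwb; exact absurd hwb hMpos.ne
    · rw [if_neg hbv] at hwb; exact ⟨hb0, hwb⟩
  · rw [dif_neg hb0] at hwb; exact absurd hwb hMpos.ne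

/-- If every non-stubborn node can reach a stubborn node in the reversed follow graph,
the matrix `G` of the opinion dynamics equilibrium is invertible, so `Gθ = FΨ` has a
unique solution `θ` for every stubborn opinion vector `Ψ`. -/
theorem equilibrium_matrix_invertible {V : Type*} [Fintype V] [DecidableEq V]
    (E : V → V → Prop) [DecidableRel E]
    (V0 : Set V) [DecidablePred (· ∈ V0)]
    (lam : V → ℝ) (hlam : ∀ k, 0 < lam k)
    (hfriend : ∀ i, i ∉ V0 → ∃ j, E j i)
    (hreach : ∀ v, v ∉ V0 → ∃ s ∈ V0, Relation.ReflTransGen (fun a b => E b a) v s)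
    (G : Matrix {v : V // v ∉ V0} {v : V // v ∉ V0} ℝ)
    (hG : ∀ i j : {v : V // v ∉ V0},
      G i j = if i = j then -∑ k ∈ Finset.univ.filter (fun k => E k i.1), lam k
              else if E j.1 i.1 then lam j.1 else 0)
    (F : Matrix {v : V // v ∉ V0} {v : V // v ∈ V0} ℝ)
    (hF : ∀ i j, F i j = if E j.1 i.1 then lam j.1 else 0) :
    IsUnit G ∧ ∀ Ψ : {v : V // v ∈ V0} → ℝ, ∃! θ, G.mulVec θ = F.mulVec Ψ := by
  classical
  -- kernel is trivial
  have hker : ∀ x : {v : V // v ∉ V0} → ℝ, G.mulVec x = 0 → x = 0 := by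
    intro x hx
    by_contra hx0
    obtain ⟨i0, hi0⟩ : ∃ i, x i ≠ 0 := by
      by_contra h
      push_neg at h
      exact hx0 (funext h)
    have hne : (Finset.univ : Finset {v : V // v ∉ V0}).Nonempty := ⟨i0, Finset.mem_univ i0⟩
    set M : ℝ := Finset.univ.sup' hne (fun j => |x j|) with hMdef
    have hM : ∀ j, |x j| ≤ M := by
      intro j; rw [hMdef]; exact Finset.le_sup' (fun j => |x j|) (Finset.mem_univ j)
    obtain ⟨v, _, hv⟩ := Finset.exists_mem_eq_sup' hne (fun j => |x j|)
    have hMpos : 0 < M := lt_of_lt_of_le (abs_pos.mpr hi0) (hM i0)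
    -- choose sign so that the maximum is attained positively
    have key : ∀ (y : {v : V // v ∉ V0} → ℝ), G.mulVec y = 0 → (∀ j, |y j| ≤ M) →
        ∀ u : {v : V // v ∉ V0}, y u = M → False := by
      intro y hy hyM u hu
      obtain ⟨s, hs0, hpath⟩ := hreach u.1 u.2
      have main : ∀ a, Relation.ReflTransGen (fun a b => E b a) a s →
          ∀ h : a ∉ V0, y ⟨a, h⟩ = M → False := by
        intro a hpath
        induction hpath using Relation.ReflTransGen.head_induction_on with
        | refl => intro h _; exact h hs0
        | head hab _ ih =>
          rename_i c d _
          intro h hya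
          obtain ⟨hd, hyd⟩ := equilibrium_crux E V0 lam hlam G hG y hy M hyM hMpos
            ⟨c, h⟩ hya d hab
          exact ih hd hyd
      exact main u.1 hpath u.2 hu
    rcases abs_cases (x v) with ⟨h1, _⟩ | ⟨h1, _⟩
    · exact key x hx hM v ((hv.trans h1).symm)
    · refine key (-x) ?_ (fun j => by simpa using hM j) v ?_
      · rw [Matrix.mulVec_neg, hx, neg_zero]
      · simp only [Pi.neg_apply]; exact (hv.trans h1).symm
  -- injectivity hence invertibility
  have hinj : Function.Injective G.mulVec := by
    intro a b hab
    have : G.mulVec (a - b) = 0 := by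
      rw [Matrix.mulVec_sub, hab, sub_self]
    have := hker _ this
    exact sub_eq_zero.mp this
  have hunit : IsUnit G := Matrix.mulVec_injective_iff_isUnit.mp hinj
  refine ⟨hunit, fun Ψ => ?_⟩
  obtain ⟨B, hB⟩ := hunit
  have hBG : B.inv * G = 1 := by rw [← hB]; exact B.inv_mul
  have hGB : G * B.inv = 1 := by rw [← hB]; exact B.mul_inv
  refine ⟨B.inv.mulVec (F.mulVec Ψ), ?_, ?_⟩
  · show G.mulVec (B.inv.mulVec (F.mulVec Ψ)) = F.mulVec Ψ
    rw [Matrix.mulVec_mulVec, Matrix.mulVec_mulVec, hGB, Matrix.one_mul]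
  · intro θ hθ
    have h5 : B.inv.mulVec (G.mulVec θ) = B.inv.mulVec (F.mulVec Ψ) := by rw [hθ]
    rw [Matrix.mulVec_mulVec, Matrix.mulVec_mulVec, hBG, Matrix.one_mulVec] at h5
    rw [h5, Matrix.mulVec_mulVec]
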